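/- arXiv:1407.2779 — 3 statements merged into one kernel-verified Lean document; each statement's English description precedes it below -/
import Mathlib

section
/- For natural numbers k < n, the product of the hook lengths of the rectangular Young diagram with k+1 rows and n-k columns equals ∏_{i=0}^{k} (n-k+i)! / i!. Consequently the quantity ((k+1)(n-k))! · ∏_{i=0}^{k} i! / ∏_{i=0}^{k} (n-k+i)! is a positive integer. -/
open Finset Nat

/-- counting indicator sum for small `s` -/
private lemma count_base (q b : ℕ) (s : ℕ) (hs : s ≤ q) :
    (∑ i ∈ range s, if q ≤ b + i % q then 1 else 0) = s - min s (q - b) := by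
  induction s with
  | zero => simp
  | succ s ih =>
    rw [Finset.sum_range_succ, ih (by omega)]
    have hmod : s % q = s := Nat.mod_eq_of_lt (by omega)
    rw [hmod]
    split_ifs with h <;> omega

private lemma sub_min_le (q b s : ℕ) (hq : 0 < q) (hb : b < q) (hs : s ≤ q) :
    s - min s (q - b) ≤ s * b / q := by
  rcases le_or_gt q (s + b) with hc | hc
  · have h1 : s - min s (q - b) = s + b - q := by omega
    rw [h1, Nat.le_div_iff_mul_le hq]
    have e1 : (s + b - q) * q = (s + b - q) * b + (s + b - q) * (q - b) := by
      rw [← Nat.mul_add]; congr 1; omega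
    have e2 : s * b = (s + b - q) * b + (q - b) * b := by
      rw [← Nat.add_mul]; congr 1; omega
    rw [e1, e2]
    exact Nat.add_le_add_left (by
      calc (s + b - q) * (q - b) ≤ b * (q - b) := Nat.mul_le_mul_right _ (by omega)
        _ = (q - b) * b := Nat.mul_comm _ _) _
  · have : min s (q - b) = s := by omega
    simp [this]

/-- counting lemma: number of `i < s` with `i % q ≥ q - b` is at most `s*b/q`. -/
private lemma count_aux (q b : ℕ) (hq : 0 < q) (hb : b < q) :
    ∀ s, (∑ i ∈ range s, if q ≤ b + i % q then 1 else 0) ≤ s * b / q := by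
  intro s
  induction s using Nat.strong_induction_on with
  | _ s ih =>
    rcases le_or_gt s q with hs | hs
    · rw [count_base q b s hs]
      exact sub_min_le q b s hq hb hs
    · have hsplit : s = q + (s - q) := by omega
      rw [hsplit, Finset.sum_range_add]
      have hshift : ∀ i, (if q ≤ b + (q + i) % q then (1:ℕ) else 0)
          = if q ≤ b + i % q then 1 else 0 := by
        intro i; rw [Nat.add_mod_left]
      simp only [hshift]
      have h1 : (∑ i ∈ range q, if q ≤ b + i % q then (1:ℕ) else 0) = b := by
        rw [count_base q b q le_rfl]; omega
      have h2 := ih (s - q) (by omega)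
      have h3 : (q + (s - q)) * b / q = b + (s - q) * b / q := by
        rw [Nat.add_mul, Nat.mul_comm q b, ← Nat.mul_add_div hq]
        ring_nf
      rw [h3, h1]
      omega

/-- per-power inequality on floor divisions -/
private lemma sum_div_le (q m s : ℕ) (hq : 0 < q) :
    (∑ i ∈ range s, (m + i) / q) ≤ s * m / q + ∑ i ∈ range s, i / q := by
  have key : ∀ i, (m + i) / q = m / q + i / q + if q ≤ m % q + i % q then 1 else 0 :=
    fun i => Nat.add_div hq
  simp only [key]
  rw [Finset.sum_add_distrib, Finset.sum_add_distrib, Finset.sum_const, card_range, smul_eq_mul]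
  have hsm : s * m / q = s * (m / q) + s * (m % q) / q := by
    conv_lhs => rw [← Nat.div_add_mod m q]
    rw [Nat.mul_add, ← Nat.mul_assoc, Nat.mul_comm s q, Nat.mul_assoc,
      Nat.mul_add_div hq]
  rw [hsm]
  have := count_aux q (m % q) hq (Nat.mod_lt m hq) s
  omega

private lemma prod_factorials_pos (f : ℕ → ℕ) (s : Finset ℕ) :
    0 < ∏ i ∈ s, Nat.factorial (f i) :=
  Finset.prod_pos fun i _ => Nat.factorial_pos _

/-- the main divisibility -/
private lemma dvd_main (k m : ℕ) (hm : 0 < m) :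
    (∏ i ∈ range (k + 1), Nat.factorial (m + i)) ∣
      Nat.factorial ((k + 1) * m) * ∏ i ∈ range (k + 1), Nat.factorial i := by
  have hA : (∏ i ∈ range (k + 1), Nat.factorial (m + i)) ≠ 0 :=
    (prod_factorials_pos _ _).ne'
  have hB : Nat.factorial ((k + 1) * m) * (∏ i ∈ range (k + 1), Nat.factorial i) ≠ 0 :=
    (Nat.mul_pos (Nat.factorial_pos _) (prod_factorials_pos _ _)).ne'
  rw [← Nat.factorization_le_iff_dvd hA hB, Finsupp.le_def]
  intro p
  by_cases hp : p.Prime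
  · haveI : Fact p.Prime := ⟨hp⟩
    set N := (k + 1) * m with hN
    set b := Nat.log p N + 1 with hb
    have hle : ∀ x, x ≤ N → Nat.log p x < b := fun x hx =>
      Nat.lt_succ_of_le (Nat.log_mono_right hx)
    have hmi : ∀ i, i ∈ range (k + 1) → m + i ≤ N := by
      intro i hi
      rw [Finset.mem_range] at hi
      have : i ≤ k * m := le_trans (by omega) (Nat.le_mul_of_pos_right k hm)
      rw [hN]; rw [Nat.add_mul, Nat.one_mul]; omega
    have hiN : ∀ i, i ∈ range (k + 1) → i ≤ N := fun i hi =>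
      le_trans (by have := Finset.mem_range.mp hi; omega)
        (le_trans (Nat.le_mul_of_pos_right (k+1) hm) (le_of_eq rfl))
    -- factorization of products
    have hfprod : ∀ (f : ℕ → ℕ),
        ((∏ i ∈ range (k + 1), Nat.factorial (f i)).factorization) p
          = ∑ i ∈ range (k + 1), ((Nat.factorial (f i)).factorization p) := by
      intro f
      rw [Nat.factorization_prod (fun i _ => (Nat.factorial_pos _).ne')]
      exact Finset.sum_apply' p
    have hfact : ∀ x, Nat.log p x < b →
        ((Nat.factorial x).factorization p) = ∑ t ∈ Finset.Ico 1 b, x / p ^ t := by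
      intro x hx
      rw [Nat.factorization_def _ hp]
      exact padicValNat_factorial hx
    rw [hfprod, Nat.factorization_mul (Nat.factorial_ne_zero _) (prod_factorials_pos _ _).ne']
    rw [Finsupp.add_apply, hfprod]
    rw [hfact N (hle N le_rfl)]
    calc (∑ i ∈ range (k + 1), ((Nat.factorial (m + i)).factorization p))
        = ∑ i ∈ range (k + 1), ∑ t ∈ Finset.Ico 1 b, (m + i) / p ^ t := by
          refine Finset.sum_congr rfl fun i hi => hfact _ (hle _ (hmi i hi))
      _ = ∑ t ∈ Finset.Ico 1 b, ∑ i ∈ range (k + 1), (m + i) / p ^ t := Finset.sum_comm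
      _ ≤ ∑ t ∈ Finset.Ico 1 b, ((k + 1) * m / p ^ t + ∑ i ∈ range (k + 1), i / p ^ t) := by
          refine Finset.sum_le_sum fun t _ => sum_div_le _ _ _ (Nat.pow_pos (n := t) hp.pos)
      _ = (∑ t ∈ Finset.Ico 1 b, N / p ^ t)
            + ∑ t ∈ Finset.Ico 1 b, ∑ i ∈ range (k + 1), i / p ^ t := by
          rw [Finset.sum_add_distrib]
      _ = (∑ t ∈ Finset.Ico 1 b, N / p ^ t)
            + ∑ i ∈ range (k + 1), ((Nat.factorial i).factorization p) := by
          congr 1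
          rw [Finset.sum_comm]
          exact Finset.sum_congr rfl fun i hi => (hfact _ (hle _ (hiN i hi))).symm
  · simp [Nat.factorization_eq_zero_of_not_prime _ hp]

private lemma reindex_Icc (M : ℕ) (f : ℕ → ℕ) :
    (∏ c ∈ Finset.Icc 1 M, f (M - c)) = ∏ j ∈ range M, f j := by
  refine Finset.prod_nbij' (fun c => M - c) (fun j => M - j) ?_ ?_ ?_ ?_ ?_ <;>
    intros a ha <;> simp only [Finset.mem_Icc, Finset.mem_range] at * <;> omega

private lemma inner_prod (i m : ℕ) :
    Nat.factorial i * (∏ j ∈ range m, (i + j + 1)) = Nat.factorial (i + m) := by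
  induction m with
  | zero => simp
  | succ m ih =>
    rw [Finset.prod_range_succ, ← Nat.mul_assoc, ih, ← Nat.add_assoc]
    rw [Nat.factorial_succ (i + m), Nat.mul_comm]

/-- key product identity: hook product times `∏ i!` equals `∏ (m+i)!` -/
private lemma key_identity (k m : ℕ) :
    (∏ r ∈ Finset.Icc 1 (k + 1), ∏ c ∈ Finset.Icc 1 m, ((k + 1 - r) + (m - c) + 1))
      * (∏ i ∈ range (k + 1), Nat.factorial i)
      = ∏ i ∈ range (k + 1), Nat.factorial (m + i) := by
  have h1 : (∏ r ∈ Finset.Icc 1 (k + 1), ∏ c ∈ Finset.Icc 1 m, ((k + 1 - r) + (m - c) + 1))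
      = ∏ i ∈ range (k + 1), ∏ j ∈ range m, (i + j + 1) := by
    rw [reindex_Icc (k + 1) (fun i => ∏ c ∈ Finset.Icc 1 m, (i + (m - c) + 1))]
    exact Finset.prod_congr rfl fun i _ => reindex_Icc m (fun j => i + j + 1)
  rw [h1, ← Finset.prod_mul_distrib]
  refine Finset.prod_congr rfl fun i _ => ?_
  rw [Nat.mul_comm, inner_prod i m, Nat.add_comm]

/-- The product of the hook lengths of the rectangular Young diagram with `k+1` rows and
`n-k` columns equals `∏_{i=0}^{k} (n-k+i)! / i!`, and consequently
`((k+1)(n-k))! · ∏ i! / ∏ (n-k+i)!` is a positive integer. -/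
theorem hook_length_rectangular (k n : ℕ) (h : k < n) :
    (∏ r ∈ Finset.Icc 1 (k + 1), ∏ c ∈ Finset.Icc 1 (n - k),
        ((k + 1 - r) + (n - k - c) + 1)) =
      (∏ i ∈ Finset.range (k + 1), Nat.factorial (n - k + i)) /
        (∏ i ∈ Finset.range (k + 1), Nat.factorial i) ∧
    (∏ i ∈ Finset.range (k + 1), Nat.factorial (n - k + i)) ∣
      (Nat.factorial ((k + 1) * (n - k)) * ∏ i ∈ Finset.range (k + 1), Nat.factorial i) ∧
    0 < (Nat.factorial ((k + 1) * (n - k)) * ∏ i ∈ Finset.range (k + 1), Nat.factorial i) /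
      (∏ i ∈ Finset.range (k + 1), Nat.factorial (n - k + i)) := by
  set m := n - k with hm
  have hm0 : 0 < m := by omega
  have hkey := key_identity k m
  have hdvd := dvd_main k m hm0
  refine ⟨?_, hdvd, ?_⟩
  · exact (Nat.div_eq_of_eq_mul_left (prod_factorials_pos _ _) hkey.symm).symm
  · exact Nat.div_pos (Nat.le_of_dvd
      (Nat.mul_pos (Nat.factorial_pos _) (prod_factorials_pos _ _)) hdvd)
      (prod_factorials_pos _ _)
end

section
/- Let p be a prime and m ≥ 2 a natural number. The number of pairs of finite sequences ((k_1,…,k_s),(n_1,…,n_s)) of positive integers of the same length s, satisfying k_1 ⋯ k_s = p, n_1 ⋯ n_s = m, n_l > 1 for every l > 1, and k_l > 1 for every l < s, equals the number of positive divisors of m. -/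
private def fpair (p m d : ℕ) : List ℕ × List ℕ :=
  if d = 1 then ([p], [m]) else ([p, 1], [m / d, d])

/-- For a prime `p`, the number of pairs of sequences `((k₁,…,k_s),(n₁,…,n_s))` of positive
integers of the same length with `∏ kᵢ = p`, `∏ nᵢ = m`, `n_l > 1` for `l > 1` and
`k_l > 1` for `l < s`, equals the number of positive divisors of `m`. -/
theorem count_ulrich_k_prime (p m : ℕ) (hp : p.Prime) (hm : 2 ≤ m) :
    Set.ncard {q : List ℕ × List ℕ |
      q.1.length = q.2.length ∧
      q.1.prod = p ∧ q.2.prod = m ∧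
      (∀ x ∈ q.1, 0 < x) ∧ (∀ x ∈ q.2, 0 < x) ∧
      (∀ l : Fin q.2.length, 0 < (l : ℕ) → 1 < q.2.get l) ∧
      (∀ l : Fin q.1.length, (l : ℕ) < q.1.length - 1 → 1 < q.1.get l)} =
    m.divisors.card := by
  classical
  have hm0 : 0 < m := by omega
  have hset : {q : List ℕ × List ℕ |
      q.1.length = q.2.length ∧
      q.1.prod = p ∧ q.2.prod = m ∧
      (∀ x ∈ q.1, 0 < x) ∧ (∀ x ∈ q.2, 0 < x) ∧
      (∀ l : Fin q.2.length, 0 < (l : ℕ) → 1 < q.2.get l) ∧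
      (∀ l : Fin q.1.length, (l : ℕ) < q.1.length - 1 → 1 < q.1.get l)} =
      ↑(m.divisors.image (fpair p m)) := by
    ext q
    simp only [Finset.coe_image, Set.mem_image, Finset.mem_coe, Nat.mem_divisors,
      Set.mem_setOf_eq]
    constructor
    · rintro ⟨hlen, hk, hn, hkpos, hnpos, hn1, hk1⟩
      obtain ⟨l1, l2⟩ := q
      dsimp at *
      match l1, l2, hlen, hk, hn, hkpos, hnpos, hn1, hk1 with
      | [], _, hlen, hk, _, _, _, _, _ =>
        simp at hk
        exact absurd hk.symm hp.ne_one
      | [a], l2, hlen, hk, hn, hkpos, hnpos, hn1, hk1 =>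
        match l2, hlen with
        | [n], _ =>
          refine ⟨1, ⟨one_dvd m, hm0.ne'⟩, ?_⟩
          simp at hk hn
          simp [fpair, hk, hn]
      | a :: b :: t, l2, hlen, hk, hn, hkpos, hnpos, hn1, hk1 =>
        have ha : 1 < a := hk1 ⟨0, by simp⟩ (by simp)
        simp only [List.prod_cons] at hk
        have hadvd : a ∣ p := ⟨b * t.prod, hk.symm⟩
        have ha' : a = p := ((hp.eq_one_or_self_of_dvd a hadvd).resolve_left (by omega))
        rw [ha'] at hk
        have hbt : b * t.prod = 1 := by
          have hp0 : 0 < p := hp.pos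
          have h' : p * (b * t.prod) = p * 1 := by simpa [mul_assoc] using hk
          exact Nat.eq_of_mul_eq_mul_left hp0 h'
        have hb1 : b = 1 := Nat.dvd_one.mp ⟨t.prod, hbt.symm⟩
        match t with
        | c :: t' =>
          have hb' : 1 < b := hk1 ⟨1, by simp⟩ (by simp)
          omega
        | [] =>
          match l2, hlen with
          | [n1, n2], _ =>
            have hn2 : 1 < n2 := hn1 ⟨1, by simp⟩ (by simp)
            simp only [List.prod_cons, List.prod_nil, mul_one] at hn
            have hd : n2 ∣ m := ⟨n1, by rw [← hn]; ring⟩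
            refine ⟨n2, ⟨hd, hm0.ne'⟩, ?_⟩
            have hq : m / n2 = n1 := by
              rw [← hn]; exact Nat.mul_div_cancel n1 (by omega)
            have e : fpair p m n2 = ([p, 1], [m / n2, n2]) :=
              if_neg (show ¬ n2 = 1 by omega)
            rw [e, ha', hb1, hq]
    · rintro ⟨d, ⟨hd, _⟩, rfl⟩
      have hd0 : 0 < d := Nat.pos_of_dvd_of_pos hd hm0
      by_cases h1 : d = 1
      · subst h1
        have e : fpair p m 1 = ([p], [m]) := rfl
        rw [e]
        refine ⟨rfl, by simp, by simp, by simpa using hp.pos, by intro x hx; simp at hx; omega,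
          ?_, ?_⟩
        · intro l hl
          exact absurd hl (by have : (l : ℕ) < 1 := l.isLt; omega)
        · intro l hl
          exact absurd hl (by simp)
      · have hd1 : 1 < d := by omega
        have hdiv : 0 < m / d := Nat.div_pos (Nat.le_of_dvd hm0 hd) hd0
        have e : fpair p m d = ([p, 1], [m / d, d]) := if_neg h1
        rw [e]
        refine ⟨rfl, by simp, by simp [Nat.div_mul_cancel hd], ?_, ?_, ?_, ?_⟩
        · intro x hx
          simp at hx
          rcases hx with rfl | rfl
          · exact hp.pos
          · omega
        · intro x hx
          simp at hx
          rcases hx with rfl | rfl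
          · exact hdiv
          · omega
        · intro l hl
          have h2 : (l : ℕ) < 2 := l.isLt
          have hl' : l = ⟨1, by simp⟩ := Fin.ext (show (l : ℕ) = 1 by omega)
          rw [hl']
          simpa using hd1
        · intro l hl
          have h2 : (l : ℕ) < 2 := l.isLt
          simp only [List.length_cons, List.length_nil] at hl
          have hl' : l = ⟨0, by simp⟩ := Fin.ext (show (l : ℕ) = 0 by omega)
          rw [hl']
          simpa using hp.one_lt
  rw [hset, Set.ncard_coe_finset]
  apply Finset.card_image_of_injOn
  intro d hd d' hd' h
  by_cases h1 : d = 1 <;> by_cases h2 : d' = 1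
  · omega
  · exfalso; simp [fpair, h1, h2] at h
  · exfalso; simp [fpair, h1, h2] at h
  · simp [fpair, h1, h2] at h
    exact h.2
end

section
/- Let k, n be natural numbers with 2(k+1) ≤ n+1, and define t_{i,j} = b_j + n - j + 2 - a_i - (n-k) + (i-1) where b_j = (k+1-j)(n-k-1) for 1 ≤ j ≤ k+1 and a_i = 0 for all 1 ≤ i ≤ n-k. Then the map (i,j) ↦ t_{i,j} is a bijection from {1,…,n-k} × {1,…,k+1} onto {1,…,(k+1)(n-k)}. -/
/-- With `b_j = (k+1-j)(n-k-1)` and `a_i = 0`, the map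
`(i,j) ↦ t_{i,j} = b_j + n - j + 2 - a_i - (n-k) + (i-1)` is a bijection from
`{1,…,n-k} × {1,…,k+1}` onto `{1,…,(k+1)(n-k)}`. -/
theorem minimal_ulrich_bijection (k n : ℕ) (h : 2 * (k + 1) ≤ n + 1) :
    Set.BijOn
      (fun p : ℕ × ℕ =>
        ((k : ℤ) + 1 - (p.2 : ℤ)) * ((n : ℤ) - (k : ℤ) - 1) + (n : ℤ) - (p.2 : ℤ) + 2
          - 0 - ((n : ℤ) - (k : ℤ)) + ((p.1 : ℤ) - 1))
      ((Set.Icc 1 (n - k) : Set ℕ) ×ˢ (Set.Icc 1 (k + 1) : Set ℕ))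
      (Set.Icc (1 : ℤ) (((k : ℤ) + 1) * ((n : ℤ) - (k : ℤ)))) := by
  have hk : k + 1 ≤ n := by omega
  set m : ℤ := (n : ℤ) - k with hm
  have hm1 : (1 : ℤ) ≤ m := by rw [hm]; have := hk; omega
  have hcast : ((n - k : ℕ) : ℤ) = m := by rw [hm]; have := hk; omega
  have hfe : ∀ i j : ℕ,
      ((k : ℤ) + 1 - (j : ℤ)) * ((n : ℤ) - (k : ℤ) - 1) + (n : ℤ) - (j : ℤ) + 2
        - 0 - ((n : ℤ) - (k : ℤ)) + ((i : ℤ) - 1) = ((k : ℤ) + 1 - j) * m + i := by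
    intro i j; rw [hm]; ring
  constructor
  · -- MapsTo
    rintro ⟨i, j⟩ ⟨⟨hi1, hi2⟩, hj1, hj2⟩
    simp only [Set.mem_Icc, hfe]
    have hi2' : (i : ℤ) ≤ m := by rw [← hcast]; exact_mod_cast hi2
    have hi1' : (1 : ℤ) ≤ i := by exact_mod_cast hi1
    have hj1' : (1 : ℤ) ≤ j := by exact_mod_cast hj1
    have hj2' : (j : ℤ) ≤ k + 1 := by exact_mod_cast hj2
    constructor
    · have h0 : (0 : ℤ) ≤ ((k : ℤ) + 1 - j) * m :=
        mul_nonneg (by linarith) (by linarith)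
      linarith
    · have h1 : ((k : ℤ) + 1 - j) * m ≤ (k : ℤ) * m :=
        mul_le_mul_of_nonneg_right (by linarith) (by linarith)
      nlinarith
  constructor
  · -- InjOn
    rintro ⟨i, j⟩ ⟨⟨hi1, hi2⟩, hj1, hj2⟩ ⟨i', j'⟩ ⟨⟨hi1', hi2'⟩, hj1', hj2'⟩ heq
    simp only [hfe] at heq
    have hiM : (i : ℤ) ≤ m := by rw [← hcast]; exact_mod_cast hi2
    have hiM' : (i' : ℤ) ≤ m := by rw [← hcast]; exact_mod_cast hi2'
    have hi1z : (1 : ℤ) ≤ i := by exact_mod_cast hi1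
    have hi1z' : (1 : ℤ) ≤ i' := by exact_mod_cast hi1'
    have hd : ((j' : ℤ) - j) * m = (i' : ℤ) - i := by linarith [heq]
    have hd1 : ((j' : ℤ) - j) < 1 := by
      by_contra hcon
      push_neg at hcon
      nlinarith
    have hd2 : (-1 : ℤ) < ((j' : ℤ) - j) := by
      by_contra hcon
      push_neg at hcon
      nlinarith
    have hjj : (j : ℤ) = j' := by omega
    have hii : (i : ℤ) = i' := by
      have : ((j' : ℤ) - j) = 0 := by omega
      rw [this] at hd; linarith
    have : j = j' := by exact_mod_cast hjj
    have : i = i' := by exact_mod_cast hii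
    simp_all
  · -- SurjOn
    rintro t ⟨ht1, ht2⟩
    set q : ℤ := (t - 1) / m with hq
    set r : ℤ := (t - 1) % m with hr
    have hdm : m * q + r = t - 1 := Int.mul_ediv_add_emod (t - 1) m
    have hr0 : 0 ≤ r := Int.emod_nonneg _ (by linarith)
    have hrm : r < m := Int.emod_lt_of_pos _ (by linarith)
    have hq0 : 0 ≤ q := Int.ediv_nonneg (by linarith) (by linarith)
    have hqk : q ≤ k := by
      by_contra hcon
      push_neg at hcon
      have : ((k : ℤ) + 1) * m ≤ m * q := by nlinarith
      linarith
    refine ⟨(r.toNat + 1, k + 1 - q.toNat), ⟨⟨by omega, ?_⟩, by omega, by omega⟩, ?_⟩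
    · -- r.toNat + 1 ≤ n - k
      have : (r.toNat : ℤ) + 1 ≤ m := by omega
      rw [← hcast] at this
      exact_mod_cast this
    · simp only [hfe]
      have hqt : (q.toNat : ℤ) = q := Int.toNat_of_nonneg hq0
      have hqtk : q.toNat ≤ k := by omega
      have hjc : ((k + 1 - q.toNat : ℕ) : ℤ) = (k : ℤ) + 1 - q := by
        omega
      have hic : ((r.toNat + 1 : ℕ) : ℤ) = r + 1 := by
        push_cast; omega
      rw [hjc, hic]
      linear_combination hdm
end
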